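/- arXiv:2207.00354 — 4 statements merged into one kernel-verified Lean document; each statement's English description precedes it below -/
import Mathlib

section
/- If S, S' ⊆ ℕ and the symmetric difference S Δ S' = (S \ S') ∪ (S' \ S) is infinite, then the sets {2^(2^n) : n ∈ S} and {2^(2^m) : m ∈ S'} are not related (i.e. {2^(2^n)}_{n∈S} ≁ {2^(2^m)}_{m∈S'}). -/
/-- Subsets `L, L'` of the positive integers are *related via `k`* (for `k ≥ 1`) if:
(1) for every `m ∈ L` with `m > (k+1)²` there is `m' ∈ L'` with `m ≤ k·m'` and `m' ≤ k·m`, and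
(2) symmetrically. -/
def RelatedVia (k : ℕ) (L L' : Set ℕ) : Prop :=
  (∀ m ∈ L, (k + 1) ^ 2 < m → ∃ m' ∈ L', m ≤ k * m' ∧ m' ≤ k * m) ∧
  (∀ m' ∈ L', (k + 1) ^ 2 < m' → ∃ m ∈ L, m' ≤ k * m ∧ m ≤ k * m')

/-- `L ∼ L'` iff `L` and `L'` are related via some `k ≥ 1`. -/
def Related (L L' : Set ℕ) : Prop := ∃ k : ℕ, 1 ≤ k ∧ RelatedVia k L L'

lemma key_step (k a b : ℕ) (hab : a < b) (hk : k < 2 ^ 2 ^ a) :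
    k * 2 ^ 2 ^ a < 2 ^ 2 ^ b := by
  calc k * 2 ^ 2 ^ a < 2 ^ 2 ^ a * 2 ^ 2 ^ a := by
        exact Nat.mul_lt_mul_of_lt_of_le hk le_rfl (pow_pos (by norm_num) _)
    _ = 2 ^ (2 ^ a + 2 ^ a) := by rw [pow_add]
    _ = 2 ^ (2 ^ (a + 1)) := by ring_nf
    _ ≤ 2 ^ 2 ^ b := Nat.pow_le_pow_right (by norm_num)
        (Nat.pow_le_pow_right (by norm_num) hab)

lemma no_pair (k n m : ℕ) (hn : 1 ≤ n) (hk : k < 2 ^ 2 ^ (n - 1)) (hne : m ≠ n)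
    (h1 : 2 ^ 2 ^ n ≤ k * 2 ^ 2 ^ m) (h2 : 2 ^ 2 ^ m ≤ k * 2 ^ 2 ^ n) : False := by
  rcases lt_or_gt_of_ne hne with hlt | hgt
  · have hm : 2 ^ 2 ^ m ≤ 2 ^ 2 ^ (n - 1) :=
      Nat.pow_le_pow_right (by norm_num) (Nat.pow_le_pow_right (by norm_num) (by omega))
    have : k * 2 ^ 2 ^ m ≤ k * 2 ^ 2 ^ (n - 1) := Nat.mul_le_mul_left k hm
    have := key_step k (n - 1) n (by omega) hk
    omega
  · have hk' : k < 2 ^ 2 ^ n :=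
      lt_of_lt_of_le hk (Nat.pow_le_pow_right (by norm_num)
        (Nat.pow_le_pow_right (by norm_num) (by omega)))
    have := key_step k n m hgt hk'
    omega

lemma k_small (k n : ℕ) (hn : k + 1 < n) : k < 2 ^ 2 ^ (n - 1) := by
  have h1 : n - 1 < 2 ^ (n - 1) := Nat.lt_two_pow_self
  have h2 : 2 ^ (n - 1) ≤ 2 ^ 2 ^ (n - 1) :=
    Nat.pow_le_pow_right (by norm_num) (Nat.le_of_lt (Nat.lt_two_pow_self))
  omega

lemma big_enough (k n : ℕ) (hn : k + 1 < n) : (k + 1) ^ 2 < 2 ^ 2 ^ n := by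
  have h1 : (k + 1) ^ 2 < n ^ 2 := Nat.pow_lt_pow_left hn (by norm_num)
  have h2 : n < 2 ^ n := Nat.lt_two_pow_self
  have h3 : n ^ 2 < (2 ^ n) ^ 2 := Nat.pow_lt_pow_left h2 (by norm_num)
  have h4 : (2 ^ n) ^ 2 = 2 ^ (2 * n) := by rw [← pow_mul, mul_comm]
  have h5 : 2 * n ≤ 2 ^ n := by
    have := Nat.lt_two_pow_self (n := n)
    calc 2 * n ≤ 2 ^ 1 * 2 ^ (n - 1) := by
          have : n ≤ 2 ^ (n - 1) := by
            have := Nat.one_le_two_pow (n := n - 1)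
            have h6 : n - 1 < 2 ^ (n - 1) := Nat.lt_two_pow_self
            omega
          omega
      _ = 2 ^ n := by rw [← pow_add]; congr 1; omega
  have h6 : 2 ^ (2 * n) ≤ 2 ^ 2 ^ n := Nat.pow_le_pow_right (by norm_num) h5
  omega

/-- If the symmetric difference of `S, S' ⊆ ℕ` is infinite, then
`{2^(2^n) : n ∈ S}` and `{2^(2^m) : m ∈ S'}` are not related. -/
theorem not_related_of_infinite_symmDiff (S S' : Set ℕ)
    (h : (symmDiff S S').Infinite) :
    ¬ Related {m | ∃ n ∈ S, m = 2 ^ 2 ^ n} {m | ∃ n ∈ S', m = 2 ^ 2 ^ n} := by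
  rintro ⟨k, hk, h1, h2⟩
  obtain ⟨n, hnmem, hn⟩ := h.exists_gt (k + 1)
  have hksm := k_small k n hn
  have hbig := big_enough k n hn
  rw [symmDiff_def] at hnmem
  rcases hnmem with ⟨hS, hS'⟩ | ⟨hS', hS⟩
  · obtain ⟨m', ⟨m, hmS', hm⟩, ha, hb⟩ := h1 (2 ^ 2 ^ n) ⟨n, hS, rfl⟩ hbig
    subst hm
    exact no_pair k n m (by omega) hksm (fun e => hS' (e ▸ hmS')) ha hb
  · obtain ⟨m', ⟨m, hmS, hm⟩, ha, hb⟩ := h2 (2 ^ 2 ^ n) ⟨n, hS', rfl⟩ hbig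
    subst hm
    exact no_pair k n m (by omega) hksm (fun e => hS (e ▸ hmS)) ha hb
end

section
/- If S, S' ⊆ ℕ and the symmetric difference S Δ S' is infinite, then the sets {10100 + 200·2^(2^n) : n ∈ S} and {10100 + 200·2^(2^m) : m ∈ S'} are not related. (These are the sets {|w_n|}_{n∈S} and {|w_m|}_{m∈S'} of lengths of the relators w_n.) -/
/-- The relator length `|w_n| = 10100 + 200·2^(2^n)`. -/
def ff (n : ℕ) : ℕ := 10100 + 200 * 2 ^ 2 ^ n

lemma ff_mono : StrictMono ff := fun a b h => by
  have h1 : 2 ^ a < 2 ^ b := Nat.pow_lt_pow_right one_lt_two h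
  have h2 : 2 ^ 2 ^ a < 2 ^ 2 ^ b := Nat.pow_lt_pow_right one_lt_two h1
  unfold ff; omega

lemma ff_key (k n : ℕ) (hn : 2 * k + 51 ≤ 2 ^ 2 ^ n) : k * ff n < ff (n + 1) := by
  have h2 : 2 ^ 2 ^ (n+1) = 2 ^ 2 ^ n * 2 ^ 2 ^ n := by
    rw [pow_succ, pow_mul]; ring
  unfold ff
  rw [h2]
  nlinarith [hn]

lemma aux (S S' : Set ℕ) (hinf : (S \ S').Infinite) (k : ℕ) (hk : 1 ≤ k)
    (h1 : ∀ m ∈ {m | ∃ n ∈ S, m = ff n}, (k+1)^2 < m →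
      ∃ m' ∈ {m | ∃ n ∈ S', m = ff n}, m ≤ k * m' ∧ m' ≤ k * m) : False := by
  obtain ⟨n, hn, hNn⟩ := hinf.exists_gt (2 * k + 51)
  have hn1 : 1 ≤ n := by omega
  have hbig : 2 * k + 51 ≤ 2 ^ 2 ^ (n - 1) := by
    calc 2 * k + 51 ≤ n - 1 := by omega
    _ ≤ 2 ^ (n - 1) := Nat.le_of_lt (Nat.lt_two_pow_self (n := _))
    _ ≤ 2 ^ 2 ^ (n - 1) := Nat.pow_le_pow_right (by norm_num) (Nat.le_of_lt (Nat.lt_two_pow_self (n := _)))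
  have hbign : 2 * k + 51 ≤ 2 ^ 2 ^ n := by
    calc 2 * k + 51 ≤ 2 ^ 2 ^ (n - 1) := hbig
    _ ≤ 2 ^ 2 ^ n := Nat.pow_le_pow_right (by norm_num)
        (Nat.pow_le_pow_right (by norm_num) (by omega))
  have hsq : (k + 1) ^ 2 < ff n := by
    have h1' : (k + 1) ^ 2 ≤ (2 ^ 2 ^ (n - 1)) ^ 2 :=
      Nat.pow_le_pow_left (by omega) 2
    have h2' : (2 ^ 2 ^ (n - 1)) ^ 2 = 2 ^ 2 ^ n := by
      rw [← pow_mul, show 2 ^ (n - 1) * 2 = 2 ^ n from by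
        rw [← pow_succ]; congr 1; omega]
    unfold ff; omega
  obtain ⟨m', ⟨n', hn'S', rfl⟩, hle1, hle2⟩ := h1 (ff n) ⟨n, hn.1, rfl⟩ hsq
  rcases lt_trichotomy n' n with hlt | heq | hgt
  · have h3 : ff n' ≤ ff (n - 1) := ff_mono.le_iff_le.mpr (by omega)
    have h4 : k * ff (n - 1) < ff (n - 1 + 1) := ff_key k (n - 1) hbig
    have h5 : n - 1 + 1 = n := by omega
    rw [h5] at h4
    have : k * ff n' ≤ k * ff (n - 1) := Nat.mul_le_mul_left k h3
    omega
  · exact hn.2 (heq ▸ hn'S')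
  · have h3 : ff (n + 1) ≤ ff n' := ff_mono.le_iff_le.mpr (by omega)
    have h4 : k * ff n < ff (n + 1) := ff_key k n hbign
    omega

/-- If the symmetric difference of `S, S' ⊆ ℕ` is infinite, then the sets of relator
lengths `{|w_n|}_{n∈S} = {10100 + 200·2^(2^n) : n ∈ S}` and `{|w_m|}_{m∈S'}` are not related. -/
theorem not_related_lengths_of_infinite_symmDiff (S S' : Set ℕ)
    (h : (symmDiff S S').Infinite) :
    ¬ Related {m | ∃ n ∈ S, m = 10100 + 200 * 2 ^ 2 ^ n}
        {m | ∃ n ∈ S', m = 10100 + 200 * 2 ^ 2 ^ n} := by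
  rintro ⟨k, hk, h1, h2⟩
  rw [Set.symmDiff_def] at h
  rcases Set.infinite_union.mp h with hi | hi
  · exact aux S S' hi k hk h1
  · exact aux S' S hi k hk h2
end

section
/- For any infinite subset S of {n ∈ ℕ : n > 100} and any k ∈ ℕ, the presentation ⟨a, b ∣ b^(2^(2^k)), w_n : n ∈ S, n < k⟩ satisfies the C'(1/6) small-cancellation condition. -/
/-- The free group on two generators. -/
abbrev F2 := FreeGroup (Fin 2)

/-- The first generator `a` of `F₂`. -/
def a : F2 := FreeGroup.of 0

/-- The second generator `b` of `F₂`. -/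
def b : F2 := FreeGroup.of 1

open scoped commutatorElement in
/-- The relator `w_n = [a, b^(2^(2^n))]·[a², b^(2^(2^n))]···[a^100, b^(2^(2^n))]`. -/
def w (n : ℕ) : F2 :=
  ((List.range 100).map fun i => ⁅a ^ (i + 1), b ^ 2 ^ 2 ^ n⁆).prod

/-- The symmetrized closure `R*` of a set `R` of (cyclically reduced) relators:
all elements whose reduced word is a cyclic permutation of the reduced word of
some `r ∈ R` or of its inverse. -/
def symClosure (R : Set F2) : Set F2 :=
  {g | ∃ r ∈ R, ∃ i : ℕ,
    g.toWord = r.toWord.rotate i ∨ g.toWord = (r⁻¹).toWord.rotate i}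

/-- A *piece* is a nonempty word occurring as a common prefix of two distinct
elements of the symmetrized closure `R*`. -/
def IsPiece (R : Set F2) (p : List (Fin 2 × Bool)) : Prop :=
  p ≠ [] ∧ ∃ r₁ ∈ symClosure R, ∃ r₂ ∈ symClosure R,
    r₁ ≠ r₂ ∧ p <+: r₁.toWord ∧ p <+: r₂.toWord

/-- The presentation with relators `R` satisfies `C'(1/6)`: every piece `p` that is
a prefix of some `r ∈ R*` satisfies `|p| < |r|/6`. -/
def CPrimeSixth (R : Set F2) : Prop :=
  ∀ p, IsPiece R p → ∀ r ∈ symClosure R, p <+: r.toWord →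
    6 * p.length < r.toWord.length

namespace CP
abbrev Lam := Fin 2 × Bool

/-- letter of run `t` in the cyclic run sequence; `sb = true` for the inverse word. -/
def lt (sb : Bool) (t : ℕ) : Lam :=
  if sb then
    if t % 4 = 0 then (1, true) else if t % 4 = 1 then (0, true)
    else if t % 4 = 2 then (1, false) else (0, false)
  else
    if t % 4 = 0 then (0, true) else if t % 4 = 1 then (1, true)
    else if t % 4 = 2 then (0, false) else (1, false)

/-- length of run `t`. -/
def ln (sb : Bool) (M t : ℕ) : ℕ :=
  if sb then (if t % 2 = 0 then M else 100 - t % 400 / 4)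
  else (if t % 2 = 0 then t % 400 / 4 + 1 else M)

def blk (sb : Bool) (M t : ℕ) : List Lam := List.replicate (ln sb M t) (lt sb t)

def str (sb : Bool) (M r n : ℕ) : List Lam := (List.range n).flatMap fun i => blk sb M (r + i)

lemma lt_period (sb : Bool) (t : ℕ) : lt sb (t + 400) = lt sb t := by
  unfold lt; rw [show (t + 400) % 4 = t % 4 by omega]

lemma ln_period (sb : Bool) (M t : ℕ) : ln sb M (t + 400) = ln sb M t := by
  unfold ln; rw [show (t + 400) % 2 = t % 2 by omega, show (t + 400) % 400 = t % 400 by omega]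

lemma blk_period (sb : Bool) (M t : ℕ) : blk sb M (t + 400) = blk sb M t := by
  unfold blk; rw [lt_period, ln_period]

lemma ln_pos (sb : Bool) {M : ℕ} (hM : 1 ≤ M) (t : ℕ) : 1 ≤ ln sb M t := by
  have h2 : t % 2 = 0 ∨ t % 2 = 1 := by omega
  have h4 : t % 400 / 4 ≤ 99 := by omega
  rcases sb <;> rcases h2 with h | h <;> simp [ln, h] <;> omega

lemma ln_le (sb : Bool) {M : ℕ} (hM : 100 ≤ M) (t : ℕ) : ln sb M t ≤ M := by
  have h2 : t % 2 = 0 ∨ t % 2 = 1 := by omega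
  have h4 : t % 400 / 4 ≤ 99 := by omega
  rcases sb <;> rcases h2 with h | h <;> simp [ln, h] <;> omega

lemma lt_fst_ne (sb : Bool) (t : ℕ) : (lt sb (t + 1)).1 ≠ (lt sb t).1 := by
  have h4 : t % 4 = 0 ∨ t % 4 = 1 ∨ t % 4 = 2 ∨ t % 4 = 3 := by omega
  have h4' : (t+1) % 4 = (t % 4 + 1) % 4 := by omega
  rcases sb <;> rcases h4 with h | h | h | h <;>
    simp [lt, h, h4'] 

lemma str_zero (sb : Bool) (M r : ℕ) : str sb M r 0 = [] := rfl

lemma str_succ_left (sb : Bool) (M r n : ℕ) :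
    str sb M r (n + 1) = blk sb M r ++ str sb M (r + 1) n := by
  unfold str
  simp only [List.range_succ_eq_map, List.flatMap_cons, List.flatMap_map, Nat.add_zero]
  congr 1
  apply List.flatMap_congr
  intro i _
  congr 1
  omega

lemma str_succ_right (sb : Bool) (M r n : ℕ) :
    str sb M r (n + 1) = str sb M r n ++ blk sb M (r + n) := by
  unfold str
  rw [List.range_succ]
  simp

lemma str_congr {sb : Bool} {M r r' : ℕ} (h : r % 400 = r' % 400) (n : ℕ) :
    str sb M r n = str sb M r' n := by
  unfold str
  congr 1
  ext i x
  have h1 : r + i = (r % 400 + i) + 400 * (r / 400) := by omega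
  have h2 : r' + i = (r % 400 + i) + 400 * (r' / 400) := by omega
  rw [h1, h2]
  have key : ∀ s m, blk sb M (s + 400 * m) = blk sb M s := by
    intro s m
    induction m with
    | zero => rfl
    | succ m ih => rw [show s + 400 * (m+1) = (s + 400 * m) + 400 by ring, blk_period, ih]
  rw [key, key]

lemma length_blk (sb : Bool) (M t : ℕ) : (blk sb M t).length = ln sb M t := by
  simp [blk]

lemma head?_str {sb : Bool} {M : ℕ} (hM : 1 ≤ M) (r : ℕ) {n : ℕ} (hn : 1 ≤ n) :
    (str sb M r n).head? = some (lt sb r) := by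
  obtain ⟨m, rfl⟩ : ∃ m, n = m + 1 := ⟨n - 1, by omega⟩
  rw [str_succ_left]
  have h := ln_pos sb hM r
  obtain ⟨c, hc⟩ : ∃ c, ln sb M r = c + 1 := ⟨ln sb M r - 1, by omega⟩
  simp [blk, hc, List.replicate_succ]

/-- no-cancellation relation -/
def NR (x y : Lam) : Prop := ¬(x.1 = y.1 ∧ x.2 = !y.2)

lemma nr_of_fst_ne {x y : Lam} (h : x.1 ≠ y.1) : NR x y := fun hc => h hc.1

lemma nr_refl (x : Lam) : NR x x := by
  rintro ⟨-, h⟩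
  simp at h

lemma chain'_replicate_nr (c : ℕ) (x : Lam) : List.Chain' NR (List.replicate c x) := by
  induction c with
  | zero => exact List.isChain_nil
  | succ c ih =>
    rw [List.replicate_succ]
    cases c with
    | zero => exact List.isChain_singleton _
    | succ m =>
      rw [List.replicate_succ]
      refine List.IsChain.cons_cons (nr_refl x) ?_
      rw [← List.replicate_succ]
      exact ih

lemma chain'_str (sb : Bool) {M : ℕ} (hM : 1 ≤ M) (r n : ℕ) :
    List.Chain' NR (str sb M r n) := by
  induction n generalizing r with
  | zero => exact List.isChain_nil
  | succ n ih =>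
    rw [str_succ_left]
    apply List.IsChain.append
    · exact chain'_replicate_nr _ _
    · exact ih (r + 1)
    · intro x hx y hy
      have hx' : x = lt sb r := by
        have : x ∈ blk sb M r := List.mem_of_mem_getLast? hx
        simpa [blk] using (List.eq_of_mem_replicate this)
      have hy' : y = lt sb (r + 1) := by
        rcases n with - | m
        · simp [str_zero] at hy
        · rw [head?_str hM _ (by omega)] at hy
          simpa using hy.symm
      subst hx' hy'
      exact nr_of_fst_ne (lt_fst_ne sb r).symm

lemma reduce_eq_self {L : List Lam} (h : List.Chain' NR L) : FreeGroup.reduce L = L := by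
  induction L with
  | nil => rfl
  | cons x L ih =>
    have hL := ih h.tail
    rw [FreeGroup.reduce.cons, hL]
    cases L with
    | nil => rfl
    | cons y t =>
      have hxy : NR x y := List.isChain_cons_cons.mp h |>.1
      simp only []
      rw [if_neg]
      exact fun hc => hxy ⟨hc.1, hc.2⟩

lemma toWord_mk_of_chain' {L : List Lam} (h : List.Chain' NR L) :
    (FreeGroup.mk L).toWord = L := by
  rw [FreeGroup.toWord_mk, reduce_eq_self h]

lemma invRev_replicate (c : ℕ) (x : Lam) :
    FreeGroup.invRev (List.replicate c x) = List.replicate c (x.1, !x.2) := by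
  simp [FreeGroup.invRev, List.map_replicate]

lemma invRev_append (L1 L2 : List Lam) :
    FreeGroup.invRev (L1 ++ L2) = FreeGroup.invRev L2 ++ FreeGroup.invRev L1 := by
  simp [FreeGroup.invRev]

lemma seg_eq {M : ℕ} {q : ℕ} (hq : q < 100) :
    str false M (4*q) 4 = List.replicate (q+1) ((0 : Fin 2), true) ++
      List.replicate M ((1 : Fin 2), true) ++ List.replicate (q+1) ((0 : Fin 2), false) ++
      List.replicate M ((1 : Fin 2), false) := by
  have e0 : (4*q) % 4 = 0 := by omega
  have e0' : (4*q) % 2 = 0 := by omega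
  have e0'' : (4*q) % 400 / 4 = q := by omega
  have e1 : (4*q+1) % 4 = 1 := by omega
  have e1' : (4*q+1) % 2 = 1 := by omega
  have e2 : (4*q+2) % 4 = 2 := by omega
  have e2' : (4*q+2) % 2 = 0 := by omega
  have e2'' : (4*q+2) % 400 / 4 = q := by omega
  have e3 : (4*q+3) % 4 = 3 := by omega
  have e3' : (4*q+3) % 2 = 1 := by omega
  have h4 : str false M (4*q) 4
      = blk false M (4*q) ++ (blk false M (4*q+1) ++ (blk false M (4*q+2) ++
        (blk false M (4*q+3) ++ []))) := by
    rw [str_succ_left, str_succ_left, str_succ_left, str_succ_left, str_zero]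
  rw [h4]
  simp [blk, ln, lt, e0, e0', e0'', e1, e1', e2, e2', e2'', e3, e3']

lemma of_pow_eq_mk (x : Fin 2) (n : ℕ) :
    (FreeGroup.of x : F2) ^ n = FreeGroup.mk (List.replicate n (x, true)) := by
  rw [← FreeGroup.mk_toWord (x := (FreeGroup.of x : F2) ^ n), FreeGroup.toWord_of_pow]

lemma of_pow_inv_eq_mk (x : Fin 2) (n : ℕ) :
    ((FreeGroup.of x : F2) ^ n)⁻¹ = FreeGroup.mk (List.replicate n (x, false)) := by
  rw [of_pow_eq_mk, FreeGroup.inv_mk, invRev_replicate]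
  rfl

lemma str_add (sb : Bool) (M r n₁ n₂ : ℕ) :
    str sb M r (n₁ + n₂) = str sb M r n₁ ++ str sb M (r + n₁) n₂ := by
  induction n₂ with
  | zero => simp [str_zero]
  | succ m ih =>
    rw [show n₁ + (m+1) = (n₁ + m) + 1 by ring, str_succ_right, ih, str_succ_right,
      List.append_assoc]
    congr 3
    omega

open scoped commutatorElement in
lemma w_eq_mk (n : ℕ) : w n = FreeGroup.mk (str false (2^2^n) 0 400) := by
  set M := 2^2^n with hM
  have key : ∀ m, m ≤ 100 → ((List.range m).map fun i => ⁅a ^ (i + 1), b ^ M⁆).prod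
      = FreeGroup.mk (str false M 0 (4*m)) := by
    intro m hm
    induction m with
    | zero => simp [str_zero, FreeGroup.one_eq_mk]
    | succ m ih =>
      rw [List.range_succ, List.map_append, List.prod_append, ih (by omega)]
      have hcomm : ⁅a ^ (m + 1), b ^ M⁆ = FreeGroup.mk (str false M (4*m) 4) := by
        rw [seg_eq (by omega : m < 100), commutatorElement_def, a, b,
          of_pow_inv_eq_mk, of_pow_inv_eq_mk, of_pow_eq_mk, of_pow_eq_mk]
        simp [FreeGroup.mul_mk, List.append_assoc]
      simp only [List.map_cons, List.map_nil, List.prod_cons, List.prod_nil, mul_one, hcomm]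
      rw [FreeGroup.mul_mk, show 4*(m+1) = 4*m + 4 by ring, str_add]
      norm_num
  have := key 100 (by norm_num)
  rw [w]
  convert this using 2

lemma blk_invRev {M : ℕ} {m : ℕ} (hm : m < 400) :
    FreeGroup.invRev (blk false M (399 - m)) = blk true M m := by
  have h4 : m % 4 = 0 ∨ m % 4 = 1 ∨ m % 4 = 2 ∨ m % 4 = 3 := by omega
  rcases h4 with h | h | h | h <;>
  · rw [blk, blk, invRev_replicate]
    have e1 : (399 - m) % 4 = 3 - m % 4 := by omega
    have e2 : (399 - m) % 2 = (3 - m % 4) % 2 := by omega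
    have e3 : m % 2 = m % 4 % 2 := by omega
    have e4 : (399 - m) % 400 / 4 = 99 - m % 400 / 4 := by omega
    have e5 : m % 400 / 4 ≤ 99 := by omega
    congr 1
    · rw [ln, ln, e2, e4, e3, h]
      first
      | (norm_num; omega)
      | norm_num
      | omega
    · rw [lt, lt, e1, h]
      norm_num

lemma invRev_str {M : ℕ} : ∀ m, m ≤ 400 →
    FreeGroup.invRev (str false M (400 - m) m) = str true M 0 m := by
  intro m
  induction m with
  | zero => simp [str_zero, FreeGroup.invRev]
  | succ m ih =>
    intro hm
    have h1 : str false M (400 - (m+1)) (m+1)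
        = blk false M (399 - m) ++ str false M (400 - m) m := by
      rw [str_succ_left]
      congr 2 <;> omega
    rw [h1, invRev_append, ih (by omega), blk_invRev (by omega), str_succ_right]
    congr 2
    omega

lemma toWord_w (n : ℕ) : (w n).toWord = str false (2^2^n) 0 400 := by
  rw [w_eq_mk, toWord_mk_of_chain' (chain'_str false (Nat.one_le_two_pow) 0 400)]

lemma toWord_w_inv (n : ℕ) : ((w n)⁻¹).toWord = str true (2^2^n) 0 400 := by
  rw [w_eq_mk, FreeGroup.inv_mk]
  have h := @invRev_str (2^2^n) 400 (le_refl _)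
  norm_num at h
  rw [h, toWord_mk_of_chain' (chain'_str true (Nat.one_le_two_pow) 0 400)]

lemma toWord_bpow (N : ℕ) : (b ^ N).toWord = List.replicate N ((1 : Fin 2), true) := by
  rw [b, FreeGroup.toWord_of_pow]

lemma toWord_bpow_inv (N : ℕ) :
    ((b ^ N)⁻¹).toWord = List.replicate N ((1 : Fin 2), false) := by
  rw [b, of_pow_inv_eq_mk]
  exact toWord_mk_of_chain' (chain'_replicate_nr _ _)

lemma length_str_false {M : ℕ} : ∀ m, m ≤ 100 →
    (str false M 0 (4*m)).length = m*m + m + 2*M*m := by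
  intro m
  induction m with
  | zero => simp [str_zero]
  | succ m ih =>
    intro hm
    rw [show 4*(m+1) = 4*m + 4 by ring, str_add, List.length_append, ih (by omega)]
    have : str false M (0 + 4*m) 4 = str false M (4*m) 4 := by norm_num
    rw [this, seg_eq (by omega : m < 100)]
    simp only [List.length_append, List.length_replicate]
    ring

lemma length_str (sb : Bool) (M : ℕ) : (str sb M 0 400).length = 10100 + 200*M := by
  cases sb
  · have := @length_str_false M 100 (le_refl _)
    norm_num at this
    rw [show (400 : ℕ) = 4 * 100 by norm_num, this]
    ring
  · have h := @invRev_str M 400 (le_refl _)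
    norm_num at h
    rw [← h, FreeGroup.invRev_length]
    have := @length_str_false M 100 (le_refl _)
    norm_num at this
    rw [show (400 : ℕ) = 4 * 100 by norm_num, this]
    ring

/-- normal form of a rotation of the cyclic word. -/
def nform (sb : Bool) (M ρ c : ℕ) : List Lam :=
  List.replicate c (lt sb ρ) ++ str sb M (ρ+1) 399 ++
    List.replicate (ln sb M ρ - c) (lt sb ρ)

lemma rot_form {sb : Bool} {M : ℕ} (hM : 1 ≤ M) (j : ℕ) :
    ∃ ρ c, 1 ≤ c ∧ c ≤ ln sb M ρ ∧ (str sb M 0 400).rotate j = nform sb M ρ c := by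
  induction j with
  | zero =>
    refine ⟨0, ln sb M 0, ln_pos sb hM 0, le_refl _, ?_⟩
    rw [List.rotate_zero, nform, Nat.sub_self, List.replicate_zero, List.append_nil]
    rw [show (400 : ℕ) = 399 + 1 by norm_num]
    rw [str_succ_left]
    rfl
  | succ j ih =>
    obtain ⟨ρ, c, hc1, hc2, heq⟩ := ih
    rw [← List.rotate_rotate, heq]
    rcases Nat.lt_or_ge c 2 with hc | hc
    · -- c = 1 : move to next run
      have hc1' : c = 1 := by omega
      subst hc1'
      have step : nform sb M ρ 1 = lt sb ρ ::
          (str sb M (ρ+1) 399 ++ List.replicate (ln sb M ρ - 1) (lt sb ρ)) := by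
        rw [nform]
        simp [List.append_assoc]
      rw [step, List.rotate_cons_succ, List.rotate_zero]
      refine ⟨ρ + 1, ln sb M (ρ+1), ln_pos sb hM _, le_refl _, ?_⟩
      have h1 : str sb M (ρ+1) 399 ++ List.replicate (ln sb M ρ - 1) (lt sb ρ) ++ [lt sb ρ]
          = str sb M (ρ+1) 399 ++ blk sb M (ρ + 1 + 399) := by
        rw [List.append_assoc, ← List.replicate_succ' (n := ln sb M ρ - 1) (a := lt sb ρ)]
        congr 1
        rw [show ρ + 1 + 399 = ρ + 400 by ring, blk_period, blk]
        congr 1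
        omega
      rw [h1, ← str_succ_right]
      rw [nform, Nat.sub_self, List.replicate_zero, List.append_nil, str_succ_left]
      rfl
    · -- c ≥ 2 : stay inside the run
      refine ⟨ρ, c - 1, by omega, by omega, ?_⟩
      have step : nform sb M ρ c = lt sb ρ ::
          (List.replicate (c-1) (lt sb ρ) ++ str sb M (ρ+1) 399 ++
            List.replicate (ln sb M ρ - c) (lt sb ρ)) := by
        rw [nform, show c = (c-1) + 1 by omega, List.replicate_succ]
        simp [List.append_assoc]
      rw [step, List.rotate_cons_succ, List.rotate_zero, nform]
      rw [List.append_assoc, List.append_assoc, List.append_assoc]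
      congr 2
      rw [← List.replicate_succ']
      congr 1
      omega

lemma nform_congr {sb : Bool} {M ρ ρ' c : ℕ} (h : ρ % 400 = ρ' % 400) :
    nform sb M ρ c = nform sb M ρ' c := by
  have hlt : lt sb ρ = lt sb ρ' := by
    unfold lt
    rw [show ρ % 4 = ρ' % 4 by omega]
  have hln : ln sb M ρ = ln sb M ρ' := by
    unfold ln
    rw [show ρ % 2 = ρ' % 2 by omega, h]
  rw [nform, nform, hlt, hln, str_congr (show (ρ+1) % 400 = (ρ'+1) % 400 by omega)]

lemma length_str400_shift (sb : Bool) (M : ℕ) :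
    ∀ r, (str sb M r 400).length = (str sb M 0 400).length := by
  intro r
  induction r with
  | zero => rfl
  | succ r ih =>
    have h1 : str sb M r (400 + 1) = blk sb M r ++ str sb M (r+1) 400 := by
      rw [show (400:ℕ)+1 = 1 + 400 by ring, str_add]
      rw [show str sb M r 1 = blk sb M r ++ str sb M (r+1) 0 from str_succ_left sb M r 0,
        str_zero, List.append_nil]
    have h2 : str sb M r (400 + 1) = str sb M r 400 ++ blk sb M (r + 400) := str_succ_right _ _ _ _
    have h3 := congrArg List.length h1
    rw [h2] at h3
    simp only [List.length_append, length_blk] at h3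
    rw [show r + 400 = r + 400 by rfl, ln_period] at h3
    rw [← ih]
    omega

lemma length_nform {sb : Bool} {M ρ c : ℕ} (hc : c ≤ ln sb M ρ) :
    (nform sb M ρ c).length = 10100 + 200*M := by
  have h1 : str sb M ρ 400 = blk sb M ρ ++ str sb M (ρ+1) 399 := by
    rw [show (400 : ℕ) = 399 + 1 by norm_num, str_succ_left]
  have h2 := congrArg List.length h1
  rw [length_str400_shift, length_str] at h2
  simp only [List.length_append, length_blk] at h2
  rw [nform]
  simp only [List.length_append, List.length_replicate]
  omega

lemma take_4run (c₁ c₂ c₃ c₄ : ℕ) (x₁ x₂ x₃ x₄ : Lam) (t : List Lam) (m : ℕ) :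
    (List.replicate c₁ x₁ ++ (List.replicate c₂ x₂ ++ (List.replicate c₃ x₃ ++
      (List.replicate c₄ x₄ ++ t)))).take m
    = List.replicate (min m c₁) x₁ ++ (List.replicate (min (m - c₁) c₂) x₂ ++
      (List.replicate (min (m - c₁ - c₂) c₃) x₃ ++
      (List.replicate (min (m - c₁ - c₂ - c₃) c₄) x₄ ++ t.take (m - c₁ - c₂ - c₃ - c₄)))) := by
  rw [List.take_append, List.take_append,
    List.take_append, List.take_append]
  simp [List.take_replicate, List.length_replicate]

lemma rep_eq_rep : ∀ {c c' : ℕ} {x x' : Lam} {u u' : List Lam},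
    List.replicate c x ++ u = List.replicate c' x' ++ u' →
    (∀ a ∈ u.head?, a ≠ x) → (∀ a ∈ u'.head?, a ≠ x') → 1 ≤ c → 1 ≤ c' →
    c = c' ∧ x = x' ∧ u = u' := by
  intro c
  induction c with
  | zero => intro c' x x' u u' h hu hu' hc hc'; omega
  | succ c ih =>
    intro c' x x' u u' h hu hu' hc hc'
    obtain ⟨d, rfl⟩ : ∃ d, c' = d + 1 := ⟨c' - 1, by omega⟩
    rw [List.replicate_succ, List.replicate_succ, List.cons_append, List.cons_append] at h
    obtain ⟨rfl, h2⟩ : x = x' ∧ List.replicate c x ++ u = List.replicate d x' ++ u' := by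
      have h1 := List.head_eq_of_cons_eq h
      exact ⟨h1, List.tail_eq_of_cons_eq h⟩
    rcases Nat.eq_zero_or_pos c with rfl | hcpos
    · rcases Nat.eq_zero_or_pos d with rfl | hdpos
      · simp only [List.replicate_zero, List.nil_append] at h2
        exact ⟨rfl, rfl, h2⟩
      · exfalso
        simp only [List.replicate_zero, List.nil_append] at h2
        obtain ⟨e, rfl⟩ : ∃ e, d = e + 1 := ⟨d - 1, by omega⟩
        rw [List.replicate_succ, List.cons_append] at h2
        have : u.head? = some x := by rw [h2]; rfl
        exact hu x (by rw [this]; rfl) rfl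
    · rcases Nat.eq_zero_or_pos d with rfl | hdpos
      · exfalso
        simp only [List.replicate_zero, List.nil_append] at h2
        obtain ⟨e, rfl⟩ : ∃ e, c = e + 1 := ⟨c - 1, by omega⟩
        rw [List.replicate_succ, List.cons_append] at h2
        have : u'.head? = some x := by rw [← h2]; rfl
        exact hu' x (by rw [this]; rfl) rfl
      · obtain ⟨he, -, hu⟩ := ih h2 hu hu' hcpos hdpos
        exact ⟨by omega, rfl, hu⟩

def lt4 (sb : Bool) (i : ℕ) : Lam :=
  if sb then
    if i = 0 then (1, true) else if i = 1 then (0, true)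
    else if i = 2 then (1, false) else (0, false)
  else
    if i = 0 then (0, true) else if i = 1 then (1, true)
    else if i = 2 then (0, false) else (1, false)

lemma lt_eq_lt4 (sb : Bool) (t : ℕ) : lt sb t = lt4 sb (t % 4) := rfl

def quad (s : Bool) (i : ℕ) : Lam × Lam × Lam :=
  (lt4 s (i % 4), lt4 s ((i+1) % 4), lt4 s ((i+2) % 4))

lemma quad_inj : ∀ s s' : Bool, ∀ i i' : Fin 4,
    quad s i = quad s' i' → s = s' ∧ (i : ℕ) = (i' : ℕ) := by decide

lemma quad_eq (sb : Bool) (ρ : ℕ) :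
    quad sb (ρ % 4) = (lt sb ρ, lt sb (ρ+1), lt sb (ρ+2)) := by
  unfold quad
  rw [lt_eq_lt4, lt_eq_lt4, lt_eq_lt4,
    show ρ % 4 % 4 = ρ % 4 from by omega,
    show (ρ % 4 + 1) % 4 = (ρ + 1) % 4 from by omega,
    show (ρ % 4 + 2) % 4 = (ρ + 2) % 4 from by omega]

lemma ln_even_false {M t : ℕ} (h : t % 2 = 0) : ln false M t = t % 400 / 4 + 1 := by
  simp [ln, h]
lemma ln_odd_false {M t : ℕ} (h : t % 2 = 1) : ln false M t = M := by
  simp [ln, h]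
lemma ln_even_true {M t : ℕ} (h : t % 2 = 0) : ln true M t = M := by
  simp [ln, h]
lemma ln_odd_true {M t : ℕ} (h : t % 2 = 1) : ln true M t = 100 - t % 400 / 4 := by
  simp [ln, h]

lemma window_inj {sb sb' : Bool} {M M' ρ ρ' : ℕ}
    (h0 : lt sb ρ = lt sb' ρ')
    (h1 : lt sb (ρ+1) = lt sb' (ρ'+1))
    (h1' : ln sb M (ρ+1) = ln sb' M' (ρ'+1))
    (h2 : lt sb (ρ+2) = lt sb' (ρ'+2))
    (h2' : ln sb M (ρ+2) = ln sb' M' (ρ'+2)) :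
    sb = sb' ∧ M = M' ∧ ρ % 400 = ρ' % 400 := by
  have hq : quad sb (ρ % 4) = quad sb' (ρ' % 4) := by
    rw [quad_eq, quad_eq, h0, h1, h2]
  have h4 : ρ % 4 < 4 := by omega
  have h4' : ρ' % 4 < 4 := by omega
  obtain ⟨hsb, hmod⟩ := quad_inj sb sb' ⟨ρ % 4, h4⟩ ⟨ρ' % 4, h4'⟩ hq
  subst hsb
  simp only [] at hmod
  refine ⟨rfl, ?_⟩
  have h2mod : ρ % 2 = ρ' % 2 := by omega
  have hpar : ρ % 2 = 0 ∨ ρ % 2 = 1 := by omega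
  rcases sb <;> rcases hpar with hp | hp
  · rw [ln_odd_false (show (ρ+1) % 2 = 1 by omega),
      ln_odd_false (show (ρ'+1) % 2 = 1 by omega)] at h1'
    rw [ln_even_false (show (ρ+2) % 2 = 0 by omega),
      ln_even_false (show (ρ'+2) % 2 = 0 by omega)] at h2'
    exact ⟨h1', by omega⟩
  · rw [ln_even_false (show (ρ+1) % 2 = 0 by omega),
      ln_even_false (show (ρ'+1) % 2 = 0 by omega)] at h1'
    rw [ln_odd_false (show (ρ+2) % 2 = 1 by omega),
      ln_odd_false (show (ρ'+2) % 2 = 1 by omega)] at h2'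
    exact ⟨h2', by omega⟩
  · rw [ln_odd_true (show (ρ+1) % 2 = 1 by omega),
      ln_odd_true (show (ρ'+1) % 2 = 1 by omega)] at h1'
    rw [ln_even_true (show (ρ+2) % 2 = 0 by omega),
      ln_even_true (show (ρ'+2) % 2 = 0 by omega)] at h2'
    exact ⟨h2', by omega⟩
  · rw [ln_even_true (show (ρ+1) % 2 = 0 by omega),
      ln_even_true (show (ρ'+1) % 2 = 0 by omega)] at h1'
    rw [ln_odd_true (show (ρ+2) % 2 = 1 by omega),
      ln_odd_true (show (ρ'+2) % 2 = 1 by omega)] at h2'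
    exact ⟨h1', by omega⟩

/-- tail after the first four runs of `nform`. -/
def ntail (sb : Bool) (M ρ c : ℕ) : List Lam :=
  str sb M (ρ+4) 396 ++ List.replicate (ln sb M ρ - c) (lt sb ρ)

lemma nform_4run (sb : Bool) (M ρ c : ℕ) :
    nform sb M ρ c = List.replicate c (lt sb ρ) ++
      (List.replicate (ln sb M (ρ+1)) (lt sb (ρ+1)) ++
      (List.replicate (ln sb M (ρ+2)) (lt sb (ρ+2)) ++
      (List.replicate (ln sb M (ρ+3)) (lt sb (ρ+3)) ++ ntail sb M ρ c))) := by
  have e1 : str sb M (ρ+1) 399 = blk sb M (ρ+1) ++ (blk sb M (ρ+2) ++ (blk sb M (ρ+3)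
      ++ str sb M (ρ+4) 396)) := by
    rw [show (399:ℕ) = 398 + 1 by norm_num, str_succ_left,
      show (398:ℕ) = 397 + 1 by norm_num, str_succ_left,
      show (397:ℕ) = 396 + 1 by norm_num, str_succ_left]
  rw [nform, e1, ntail]
  simp only [blk, List.append_assoc]

lemma head?_rep_app {m : ℕ} (hm : 1 ≤ m) (x : Lam) (t : List Lam) :
    (List.replicate m x ++ t).head? = some x := by
  obtain ⟨d, rfl⟩ : ∃ d, m = d + 1 := ⟨m - 1, by omega⟩
  simp [List.replicate_succ]

lemma pure_contra {L m : ℕ} {y xA : Lam} {u : List Lam}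
    (h : List.replicate L xA ++ u = List.replicate m y)
    (hL : 1 ≤ L) (hu : ∃ xB, u.head? = some xB ∧ xA.1 ≠ xB.1) : False := by
  obtain ⟨xB, huh, hne⟩ := hu
  have hxA : xA ∈ List.replicate m y := by
    rw [← h]
    exact List.mem_append.mpr (Or.inl (List.mem_replicate.mpr ⟨by omega, rfl⟩))
  have hxB : xB ∈ List.replicate m y := by
    rw [← h]
    exact List.mem_append.mpr (Or.inr (List.mem_of_mem_head? huh))
  rw [List.eq_of_mem_replicate hxA, List.eq_of_mem_replicate hxB] at hne
  exact hne rfl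

lemma head_cond {mm : ℕ} (hm : 1 ≤ mm) {xx yy : Lam} (hne : yy.1 ≠ xx.1) (t : List Lam) :
    ∀ a ∈ (List.replicate mm xx ++ t).head?, a ≠ yy := by
  intro a ha
  rw [head?_rep_app hm] at ha
  simp only [Option.mem_def, Option.some.injEq] at ha
  subst ha
  exact fun h => hne (by rw [h])

/-- If `p` has an honest 4-run prefix shape and `p` is a prefix of a rotation normal
form, then the rotation's window matches the shape. -/
lemma pin {p : List Lam} {c L₂ L₃ : ℕ} {x₁ x₂ x₃ : Lam} {u₃ : List Lam}
    (hshape : p = List.replicate c x₁ ++ (List.replicate L₂ x₂ ++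
      (List.replicate L₃ x₃ ++ u₃)))
    (hc : 1 ≤ c) (hL₂ : 1 ≤ L₂) (hL₃ : 1 ≤ L₃)
    (hu₃ : ∃ x₄, u₃.head? = some x₄ ∧ x₃.1 ≠ x₄.1)
    (h12 : x₁.1 ≠ x₂.1) (h23 : x₂.1 ≠ x₃.1)
    {sb₁ : Bool} {M₁ ρ₁ c₁ : ℕ} (hM₁ : 1 ≤ M₁) (hc₁ : 1 ≤ c₁) (hc₁l : c₁ ≤ ln sb₁ M₁ ρ₁)
    (hpre : p <+: nform sb₁ M₁ ρ₁ c₁) :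
    c₁ = c ∧ lt sb₁ ρ₁ = x₁ ∧ ln sb₁ M₁ (ρ₁+1) = L₂ ∧ lt sb₁ (ρ₁+1) = x₂ ∧
      ln sb₁ M₁ (ρ₁+2) = L₃ ∧ lt sb₁ (ρ₁+2) = x₃ := by
  obtain ⟨x₄, hx₄, h34⟩ := hu₃
  set y₁ := lt sb₁ ρ₁ with hy₁
  set y₂ := lt sb₁ (ρ₁+1) with hy₂
  set y₃ := lt sb₁ (ρ₁+2) with hy₃
  set y₄ := lt sb₁ (ρ₁+3) with hy₄
  set K₂ := ln sb₁ M₁ (ρ₁+1) with hK₂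
  set K₃ := ln sb₁ M₁ (ρ₁+2) with hK₃
  set K₄ := ln sb₁ M₁ (ρ₁+3) with hK₄
  have g12 : y₁.1 ≠ y₂.1 := (lt_fst_ne sb₁ ρ₁).symm
  have g23 : y₂.1 ≠ y₃.1 := by
    rw [hy₂, hy₃, show ρ₁+2 = (ρ₁+1)+1 from by omega]
    exact (lt_fst_ne sb₁ (ρ₁+1)).symm
  have g34 : y₃.1 ≠ y₄.1 := by
    rw [hy₃, hy₄, show ρ₁+3 = (ρ₁+2)+1 from by omega]
    exact (lt_fst_ne sb₁ (ρ₁+2)).symm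
  have hK₂p : 1 ≤ K₂ := ln_pos sb₁ hM₁ _
  have hK₃p : 1 ≤ K₃ := ln_pos sb₁ hM₁ _
  have hK₄p : 1 ≤ K₄ := ln_pos sb₁ hM₁ _
  -- p as a take of nform
  have hptake : p = (nform sb₁ M₁ ρ₁ c₁).take p.length := List.prefix_iff_eq_take.mp hpre
  rw [nform_4run, take_4run] at hptake
  set m := p.length with hmmm
  -- length of p
  have hlen : c + L₂ + L₃ < m := by
    have := congrArg List.length hshape
    simp only [List.length_append, List.length_replicate] at this
    have hu₃len : 1 ≤ u₃.length := by
      cases u₃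
      · simp at hx₄
      · simp
    omega
  -- step 1
  rcases le_or_gt m c₁ with hbig | hbig
  · -- p is a pure replicate : contradiction
    exfalso
    rw [show min m c₁ = m from by omega, show m - c₁ = 0 from by omega] at hptake
    simp only [Nat.zero_sub, Nat.zero_min, List.replicate_zero, List.nil_append,
      List.take_zero, List.append_nil] at hptake
    rw [hshape] at hptake
    exact pure_contra hptake hc ⟨x₂, head?_rep_app hL₂ x₂ _, h12⟩
  · rw [show min m c₁ = c₁ from by omega] at hptake
    have hEq1 := hshape.symm.trans hptake
    obtain ⟨hc_eq, hx₁eq, hU⟩ := rep_eq_rep hEq1 (head_cond hL₂ h12 _)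
      (head_cond (show 1 ≤ min (m - c₁) K₂ from by omega) g12 _) hc hc₁
    rcases le_or_gt (m - c₁) K₂ with hs2 | hs2
    · exfalso
      rw [show min (m - c₁) K₂ = m - c₁ from by omega,
        show m - c₁ - K₂ = 0 from by omega] at hU
      simp only [Nat.zero_sub, Nat.zero_min, List.replicate_zero, List.nil_append,
        List.take_zero, List.append_nil] at hU
      exact pure_contra hU hL₂ ⟨x₃, head?_rep_app hL₃ x₃ _, h23⟩
    · rw [show min (m - c₁) K₂ = K₂ from by omega] at hU
      obtain ⟨hL₂eq, hx₂eq, hU₂⟩ := rep_eq_rep hU (head_cond hL₃ h23 _)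
        (head_cond (show 1 ≤ min (m - c₁ - K₂) K₃ from by omega) g23 _) hL₂ hK₂p
      rcases le_or_gt (m - c₁ - K₂) K₃ with hs3 | hs3
      · exfalso
        rw [show min (m - c₁ - K₂) K₃ = m - c₁ - K₂ from by omega,
          show m - c₁ - K₂ - K₃ = 0 from by omega] at hU₂
        simp only [Nat.zero_sub, Nat.zero_min, List.replicate_zero, List.nil_append,
          List.take_zero, List.append_nil] at hU₂
        exact pure_contra hU₂ hL₃ ⟨x₄, hx₄, h34⟩
      · rw [show min (m - c₁ - K₂) K₃ = K₃ from by omega] at hU₂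
        obtain ⟨hL₃eq, hx₃eq, -⟩ := rep_eq_rep hU₂
          (fun a ha => by
            rw [hx₄] at ha
            simp only [Option.mem_def, Option.some.injEq] at ha
            subst ha
            exact fun h => h34 (by rw [h]))
          (head_cond (show 1 ≤ min (m - c₁ - K₂ - K₃) K₄ from by omega) g34 _) hL₃ hK₃p
        exact ⟨hc_eq.symm, hx₁eq.symm, hL₂eq.symm, hx₂eq.symm, hL₃eq.symm, hx₃eq.symm⟩

lemma prefix_replicate {p : List Lam} {m : ℕ} {y : Lam} (h : p <+: List.replicate m y) :
    p = List.replicate p.length y := by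
  have hl : p.length ≤ m := by simpa using h.length_le
  exact (List.prefix_iff_eq_take.mp h).trans
    (by rw [List.take_replicate, Nat.min_eq_left hl])

lemma head?_of_prefix_replicate {p : List Lam} {m : ℕ} {y : Lam}
    (h : p <+: List.replicate m y) (hne : p ≠ []) : p.head? = some y := by
  obtain ⟨d, hd⟩ : ∃ d, p.length = d + 1 :=
    ⟨p.length - 1, by have := List.length_pos_iff.mpr hne; omega⟩
  rw [prefix_replicate h, hd]
  simp [List.replicate_succ]

/-- a *pure* word which is a prefix of a rotation normal form fits in the first run. -/
lemma pure_prefix_nform {p : List Lam} {y : Lam} {sb : Bool} {M ρ c : ℕ}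
    (hM : 1 ≤ M) (hc0 : 1 ≤ c) (hcl : c ≤ ln sb M ρ)
    (hpp : p = List.replicate p.length y) (hpre : p <+: nform sb M ρ c) :
    p.length ≤ ln sb M ρ := by
  by_contra hgt
  push_neg at hgt
  have hc : c < p.length := by omega
  have hpt := List.prefix_iff_eq_take.mp hpre
  rw [nform_4run, take_4run, show min p.length c = c from by omega] at hpt
  have hK₂ : 1 ≤ ln sb M (ρ+1) := ln_pos sb hM _
  refine pure_contra (L := c) (hpt.symm.trans hpp) ?_ ⟨lt sb (ρ+1),
    head?_rep_app (show 1 ≤ min (p.length - c) (ln sb M (ρ+1)) from by omega) _ _,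
    (lt_fst_ne sb ρ).symm⟩
  · exact hc0

lemma M_gt_100 {n : ℕ} (hn : 100 < n) : 100 < 2^2^n := by
  have h1 : n < 2^n := Nat.lt_two_pow_self (n := n)
  calc (100:ℕ) < 2^7 := by norm_num
    _ ≤ 2^2^n := Nat.pow_le_pow_right (by norm_num) (by omega)

lemma six_M_lt {n k : ℕ} (hn : 100 < n) (hk : n < k) : 6 * 2^2^n < 2^2^k := by
  have h1 : n < 2^n := Nat.lt_two_pow_self (n := n)
  have h2 : 2^(n+1) ≤ 2^k := Nat.pow_le_pow_right (by norm_num) (by omega)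
  have h3 : (2:ℕ)^(n+1) = 2 * 2^n := by rw [pow_succ]; ring
  have h5 : (2:ℕ)^(3 + 2^n) = 8 * 2^2^n := by rw [pow_add]; norm_num
  have h4 : (2:ℕ)^(3 + 2^n) ≤ 2^2^k := Nat.pow_le_pow_right (by norm_num) (by omega)
  have h6 : 0 < 2^2^n := pow_pos (by norm_num) _
  omega

lemma decode {S : Set ℕ} {k : ℕ} {r : F2}
    (hr : r ∈ symClosure ({b ^ 2 ^ 2 ^ k} ∪ {x | ∃ n ∈ S, n < k ∧ x = w n})) :
    r.toWord = List.replicate (2^2^k) ((1:Fin 2), true) ∨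
    r.toWord = List.replicate (2^2^k) ((1:Fin 2), false) ∨
    ∃ n sb ρ c, n ∈ S ∧ n < k ∧ 1 ≤ c ∧ c ≤ ln sb (2^2^n) ρ ∧
      r.toWord = nform sb (2^2^n) ρ c := by
  obtain ⟨r₀, hr₀, i, hw⟩ := hr
  rcases hr₀ with h0 | h0
  · rcases Set.mem_singleton_iff.mp h0 with rfl
    rcases hw with hw | hw
    · left; rw [hw, toWord_bpow, List.rotate_replicate]
    · right; left; rw [hw, toWord_bpow_inv, List.rotate_replicate]
  · obtain ⟨n, hn, hnk, rfl⟩ := h0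
    right; right
    rcases hw with hw | hw
    · rw [toWord_w] at hw
      obtain ⟨ρ, c, h1, h2, h3⟩ := rot_form (sb := false) (M := 2^2^n) Nat.one_le_two_pow i
      exact ⟨n, false, ρ, c, hn, hnk, h1, h2, hw.trans h3⟩
    · rw [toWord_w_inv] at hw
      obtain ⟨ρ, c, h1, h2, h3⟩ := rot_form (sb := true) (M := 2^2^n) Nat.one_le_two_pow i
      exact ⟨n, true, ρ, c, hn, hnk, h1, h2, hw.trans h3⟩

/-- if the piece is a pure `b`-power (prefix of a relator `b^(2^(2^k))` word),
then it fits into a single run of one of the `w_n` relators. -/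
lemma pure_piece_bound {S : Set ℕ} (hS : S ⊆ {n | 100 < n}) {k : ℕ} {p : List Lam}
    (hpne : p ≠ []) {y : Lam} (hpp : p = List.replicate p.length y)
    {r₁ r₂ : F2}
    (hr₁ : r₁ ∈ symClosure ({b ^ 2 ^ 2 ^ k} ∪ {x | ∃ n ∈ S, n < k ∧ x = w n}))
    (hr₂ : r₂ ∈ symClosure ({b ^ 2 ^ 2 ^ k} ∪ {x | ∃ n ∈ S, n < k ∧ x = w n}))
    (hne : r₁ ≠ r₂) (hp1 : p <+: r₁.toWord) (hp2 : p <+: r₂.toWord) :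
    ∃ n ∈ S, n < k ∧ p.length ≤ 2^2^n := by
  have main : ∀ r : F2, r ∈ symClosure ({b ^ 2 ^ 2 ^ k} ∪ {x | ∃ n ∈ S, n < k ∧ x = w n}) →
      p <+: r.toWord →
      (∃ n ∈ S, n < k ∧ p.length ≤ 2^2^n) ∨
      ∃ yy : Lam, r.toWord = List.replicate (2^2^k) yy := by
    intro r hr hp
    rcases decode hr with hz | hz | ⟨n, sb, ρ, c, hnS, hnk, hc, hcl, hz⟩
    · exact Or.inr ⟨_, hz⟩
    · exact Or.inr ⟨_, hz⟩
    · left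
      refine ⟨n, hnS, hnk, ?_⟩
      have h100 : 100 < 2^2^n := M_gt_100 (hS hnS)
      have hb := pure_prefix_nform (Nat.one_le_two_pow) hc hcl hpp (by rw [← hz]; exact hp)
      exact hb.trans (ln_le sb (by omega) ρ)
  rcases main r₁ hr₁ hp1 with h1 | ⟨y₁, h1⟩
  · exact h1
  rcases main r₂ hr₂ hp2 with h2 | ⟨y₂, h2⟩
  · exact h2
  exfalso
  have e1 : p.head? = some y₁ := head?_of_prefix_replicate (by rw [← h1]; exact hp1) hpne
  have e2 : p.head? = some y₂ := head?_of_prefix_replicate (by rw [← h2]; exact hp2) hpne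
  have : y₁ = y₂ := by rw [e1] at e2; exact Option.some_injective _ e2
  subst this
  exact hne (FreeGroup.toWord_injective (h1.trans h2.symm))

end CP

/-- For any infinite `S ⊆ {n : ℕ | n > 100}` and any `k ∈ ℕ`, the presentation
`⟨a, b ∣ b^(2^(2^k)), w_n : n ∈ S, n < k⟩` satisfies `C'(1/6)`. -/

theorem cprime_sixth_Gk (S : Set ℕ) (hS : S ⊆ {n | 100 < n}) (hinf : S.Infinite) (k : ℕ) :
    CPrimeSixth ({b ^ 2 ^ 2 ^ k} ∪ {x | ∃ n ∈ S, n < k ∧ x = w n}) := by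
  intro p hp r hr hpre
  obtain ⟨hpne, r₁, hr₁, r₂, hr₂, hne12, hp1, hp2⟩ := hp
  rcases CP.decode hr with hz | hz | ⟨n, sb, ρ, c, hnS, hnk, hc, hcl, hz⟩
  · -- r is the relator b^N itself
    rw [hz, List.length_replicate]
    have hprep : p <+: List.replicate (2^2^k) ((1 : Fin 2), true) := by
      rw [← hz]; exact hpre
    have hpp := CP.prefix_replicate hprep
    obtain ⟨n, hnS, hnk, hlen⟩ := CP.pure_piece_bound hS hpne hpp hr₁ hr₂ hne12 hp1 hp2
    have := CP.six_M_lt (hS hnS) hnk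
    omega
  · rw [hz, List.length_replicate]
    have hprep : p <+: List.replicate (2^2^k) ((1 : Fin 2), false) := by
      rw [← hz]; exact hpre
    have hpp := CP.prefix_replicate hprep
    obtain ⟨n, hnS, hnk, hlen⟩ := CP.pure_piece_bound hS hpne hpp hr₁ hr₂ hne12 hp1 hp2
    have := CP.six_M_lt (hS hnS) hnk
    omega
  · -- r is a rotation of w_n or its inverse
    set M := 2^2^n with hM
    have hM1 : 1 ≤ M := Nat.one_le_two_pow
    have hM100 : 100 < M := CP.M_gt_100 (hS hnS)
    rw [hz, CP.length_nform hcl]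
    set m := p.length with hm
    rcases le_or_gt m (c + CP.ln sb M (ρ+1) + CP.ln sb M (ρ+2)) with hshort | hlong
    · have b0 : CP.ln sb M ρ ≤ M := CP.ln_le sb (by omega) ρ
      have b1 : CP.ln sb M (ρ+1) ≤ M := CP.ln_le sb (by omega) (ρ+1)
      have b2 : CP.ln sb M (ρ+2) ≤ M := CP.ln_le sb (by omega) (ρ+2)
      omega
    · exfalso
      -- p contains four runs; this pins down every relator rotation it prefixes
      set x₁ := CP.lt sb ρ with hx₁
      set x₂ := CP.lt sb (ρ+1) with hx₂
      set x₃ := CP.lt sb (ρ+2) with hx₃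
      set x₄ := CP.lt sb (ρ+3) with hx₄
      set L₂ := CP.ln sb M (ρ+1) with hL₂
      set L₃ := CP.ln sb M (ρ+2) with hL₃
      set L₄ := CP.ln sb M (ρ+3) with hL₄
      have hL₂p : 1 ≤ L₂ := CP.ln_pos sb hM1 _
      have hL₃p : 1 ≤ L₃ := CP.ln_pos sb hM1 _
      have hL₄p : 1 ≤ L₄ := CP.ln_pos sb hM1 _
      have h12 : x₁.1 ≠ x₂.1 := (CP.lt_fst_ne sb ρ).symm
      have h23 : x₂.1 ≠ x₃.1 := by
        rw [hx₂, hx₃, show ρ+2 = (ρ+1)+1 from by omega]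
        exact (CP.lt_fst_ne sb (ρ+1)).symm
      have h34 : x₃.1 ≠ x₄.1 := by
        rw [hx₃, hx₄, show ρ+3 = (ρ+2)+1 from by omega]
        exact (CP.lt_fst_ne sb (ρ+2)).symm
      have hpt := List.prefix_iff_eq_take.mp (show p <+: CP.nform sb M ρ c from by
        rw [← hz]; exact hpre)
      rw [CP.nform_4run, CP.take_4run, show min m c = c from by omega,
        show min (m - c) L₂ = L₂ from by omega,
        show min (m - c - L₂) L₃ = L₃ from by omega] at hpt
      set u₃ := List.replicate (min (m - c - L₂ - L₃) L₄) x₄ ++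
        (CP.ntail sb M ρ c).take (m - c - L₂ - L₃ - L₄) with hu₃def
      have hshape : p = List.replicate c x₁ ++ (List.replicate L₂ x₂ ++
          (List.replicate L₃ x₃ ++ u₃)) := hpt
      have hu₃ : ∃ x₄' : CP.Lam, u₃.head? = some x₄' ∧ x₃.1 ≠ x₄'.1 :=
        ⟨x₄, CP.head?_rep_app (show 1 ≤ min (m - c - L₂ - L₃) L₄ from by omega) _ _, h34⟩
      -- analyse r₁ and r₂
      have main : ∀ r' : F2,
          r' ∈ symClosure ({b ^ 2 ^ 2 ^ k} ∪ {x | ∃ n ∈ S, n < k ∧ x = w n}) →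
          p <+: r'.toWord →
          ∃ sb₁ M₁ ρ₁, 1 ≤ M₁ ∧ r'.toWord = CP.nform sb₁ M₁ ρ₁ c ∧
            CP.lt sb₁ ρ₁ = x₁ ∧ CP.ln sb₁ M₁ (ρ₁+1) = L₂ ∧ CP.lt sb₁ (ρ₁+1) = x₂ ∧
            CP.ln sb₁ M₁ (ρ₁+2) = L₃ ∧ CP.lt sb₁ (ρ₁+2) = x₃ := by
        intro r' hr' hp'
        rcases CP.decode hr' with hz' | hz' | ⟨n₁, sb₁, ρ₁, c₁, hn₁S, hn₁k, hc₁, hcl₁, hz'⟩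
        · exfalso
          have hprep : p <+: List.replicate (2^2^k) ((1 : Fin 2), true) := by
            rw [← hz']; exact hp'
          have hpp := CP.prefix_replicate hprep
          exact CP.pure_contra (hshape.symm.trans hpp) hc
            ⟨x₂, CP.head?_rep_app hL₂p x₂ _, h12⟩
        · exfalso
          have hprep : p <+: List.replicate (2^2^k) ((1 : Fin 2), false) := by
            rw [← hz']; exact hp'
          have hpp := CP.prefix_replicate hprep
          exact CP.pure_contra (hshape.symm.trans hpp) hc
            ⟨x₂, CP.head?_rep_app hL₂p x₂ _, h12⟩
        · obtain ⟨e₀, e₁, e₂, e₃, e₄, e₅⟩ := CP.pin hshape hc hL₂p hL₃p hu₃ h12 h23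
            Nat.one_le_two_pow hc₁ hcl₁ (by rw [← hz']; exact hp')
          exact ⟨sb₁, 2^2^n₁, ρ₁, Nat.one_le_two_pow, by rw [hz', e₀], e₁, e₂, e₃, e₄, e₅⟩
      obtain ⟨sb₁, M₁, ρ₁, hM₁, hzz₁, f₀, f₁, f₂, f₃, f₄⟩ := main r₁ hr₁ hp1
      obtain ⟨sb₂, M₂, ρ₂, hM₂, hzz₂, g₀, g₁, g₂, g₃, g₄⟩ := main r₂ hr₂ hp2
      obtain ⟨hsb, hMM, hρρ⟩ := CP.window_inj (f₀.trans g₀.symm) (f₂.trans g₂.symm)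
        (f₁.trans g₁.symm) (f₄.trans g₄.symm) (f₃.trans g₃.symm)
      subst hsb
      subst hMM
      exact hne12 (FreeGroup.toWord_injective
        (hzz₁.trans ((CP.nform_congr hρρ).trans hzz₂.symm)))
end

section
/- For all k, m ∈ ℕ with m ≥ k, the element w_m of the free group F₂ = ⟨a, b⟩ lies in the normal closure of {b^(2^(2^k))} in F₂. Consequently, for S ⊆ ℕ, the quotient of G(S) = ⟨a, b ∣ w_n : n ∈ S⟩ by the normal closure of the image of b^(2^(2^k)) is isomorphic to ⟨a, b ∣ b^(2^(2^k)), w_n : n ∈ S, n < k⟩. -/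
set_option maxHeartbeats 1000000


/-- `G(S) = ⟨a, b ∣ w_n : n ∈ S⟩`. -/
abbrev G (S : Set ℕ) := F2 ⧸ Subgroup.normalClosure {x | ∃ n ∈ S, x = w n}

/-- `G_k = ⟨a, b ∣ b^(2^(2^k)), w_n : n ∈ S, n < k⟩`. -/
abbrev Gk (S : Set ℕ) (k : ℕ) :=
  F2 ⧸ Subgroup.normalClosure ({b ^ 2 ^ 2 ^ k} ∪ {x | ∃ n ∈ S, n < k ∧ x = w n})

lemma w_mem_aux : ∀ k m : ℕ, k ≤ m → w m ∈ Subgroup.normalClosure {b ^ 2 ^ 2 ^ k} := by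
  intro k m hkm
  set H := Subgroup.normalClosure ({b ^ 2 ^ 2 ^ k} : Set F2) with hH
  have hnorm : H.Normal := Subgroup.normalClosure_normal
  have hb : b ^ 2 ^ 2 ^ m ∈ H := by
    have h2 : (2:ℕ) ^ 2 ^ m = 2 ^ 2 ^ k * 2 ^ (2 ^ m - 2 ^ k) := by
      rw [← pow_add]
      congr 1
      have : 2 ^ k ≤ 2 ^ m := Nat.pow_le_pow_right (by norm_num) hkm
      omega
    have h3 : b ^ 2 ^ 2 ^ m = (b ^ 2 ^ 2 ^ k) ^ 2 ^ (2 ^ m - 2 ^ k) := by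
      rw [← pow_mul, ← h2]
    have h4 : b ^ 2 ^ 2 ^ k ∈ Subgroup.normalClosure ({b ^ 2 ^ 2 ^ k} : Set F2) :=
      Subgroup.subset_normalClosure rfl
    rw [hH, h3]
    exact pow_mem h4 _
  refine Subgroup.list_prod_mem _ ?_
  intro x hx
  simp only [List.mem_map] at hx
  obtain ⟨i, -, rfl⟩ := hx
  rw [commutatorElement_def]
  exact mul_mem (hnorm.conj_mem _ hb _) (inv_mem hb)

/-- For `m ≥ k`, `w_m` lies in the normal closure of `b^(2^(2^k))` in `F₂`; consequently
for any `S ⊆ ℕ` the quotient of `G(S)` by the normal closure of the image of `b^(2^(2^k))`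
is isomorphic to `⟨a, b ∣ b^(2^(2^k)), w_n : n ∈ S, n < k⟩`. -/
theorem w_mem_normalClosure_and_quotient_iso :
    (∀ k m : ℕ, k ≤ m → w m ∈ Subgroup.normalClosure {b ^ 2 ^ 2 ^ k}) ∧
    ∀ (S : Set ℕ) (k : ℕ),
      Nonempty ((G S ⧸ Subgroup.normalClosure
          ({QuotientGroup.mk (b ^ 2 ^ 2 ^ k)} : Set (G S))) ≃* Gk S k) := by
  refine ⟨w_mem_aux, ?_⟩
  intro S k
  set N := Subgroup.normalClosure {x | ∃ n ∈ S, x = w n} with hN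
  set M := Subgroup.normalClosure
    ({b ^ 2 ^ 2 ^ k} ∪ {x | ∃ n ∈ S, n < k ∧ x = w n}) with hM
  have hNM : N ≤ M := by
    refine Subgroup.normalClosure_le_normal ?_
    rintro x ⟨n, hn, rfl⟩
    by_cases hnk : n < k
    · exact Subgroup.subset_normalClosure (Or.inr ⟨n, hn, hnk, rfl⟩)
    · have : w n ∈ Subgroup.normalClosure {b ^ 2 ^ 2 ^ k} := w_mem_aux k n (by omega)
      exact Subgroup.normalClosure_mono Set.subset_union_left this
  have hEq : Subgroup.normalClosure
      ({QuotientGroup.mk (b ^ 2 ^ 2 ^ k)} : Set (G S)) = M.map (QuotientGroup.mk' N) := by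
    rw [hM, Subgroup.map_normalClosure _ _ (QuotientGroup.mk'_surjective N)]
    apply le_antisymm
    · exact Subgroup.normalClosure_mono (by
        rintro x rfl
        exact ⟨b ^ 2 ^ 2 ^ k, Or.inl rfl, rfl⟩)
    · refine Subgroup.normalClosure_le_normal ?_
      rintro _ ⟨x, hx, rfl⟩
      rcases hx with rfl | ⟨n, hn, hnk, rfl⟩
      · exact Subgroup.subset_normalClosure rfl
      · have h1 : (QuotientGroup.mk' N) (w n) = 1 := by
          rw [QuotientGroup.mk'_apply, QuotientGroup.eq_one_iff]
          exact Subgroup.subset_normalClosure ⟨n, hn, rfl⟩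
        rw [h1]
        exact one_mem _
  exact ⟨(QuotientGroup.quotientMulEquivOfEq hEq).trans
    (QuotientGroup.quotientQuotientEquivQuotient N M hNM)⟩
end
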